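/- Every continuous real-valued function on the constraint surface Γ = {p₁² − p₂² − q₁² − q₂² + 1 = 0} ⊂ ℝ⁴ that is constant along each c-orbit must be constant on the whole set E = {A = 0} ∩ Γ, where A = (1/2)(p₁² − q₁²). -/

import Mathlib

/-- The flow of the c-orbits on ℝ⁴ with coordinates `(q₁, q₂, p₁, p₂)`. -/
noncomputable def cFlow (x : ℝ × ℝ × ℝ × ℝ) (t : ℝ) : ℝ × ℝ × ℝ × ℝ :=
  (x.1 * Real.cosh t + x.2.2.1 * Real.sinh t,
   x.2.1 * Real.cos t - x.2.2.2 * Real.sin t,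
   x.1 * Real.sinh t + x.2.2.1 * Real.cosh t,
   x.2.1 * Real.sin t + x.2.2.2 * Real.cos t)

/-- The constraint surface `Γ = {p₁² − p₂² − q₁² − q₂² + 1 = 0}`. -/
def GammaSet : Set (ℝ × ℝ × ℝ × ℝ) :=
  {x | x.2.2.1^2 - x.2.2.2^2 - x.1^2 - x.2.1^2 + 1 = 0}

/-- The set `E = {A = 0} ∩ Γ` where `A = (1/2)(p₁² − q₁²)`. -/
def Eset : Set (ℝ × ℝ × ℝ × ℝ) :=
  {x | (1/2) * (x.2.2.1^2 - x.1^2) = 0} ∩ GammaSet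

/-- The flow preserves the constraint surface. -/
lemma cFlow_mem_Gamma {x : ℝ × ℝ × ℝ × ℝ} (hx : x ∈ GammaSet) (t : ℝ) :
    cFlow x t ∈ GammaSet := by
  simp only [GammaSet, Set.mem_setOf_eq, cFlow] at *
  have h1 := Real.cosh_sq_sub_sinh_sq t
  have h2 := Real.sin_sq_add_cos_sq t
  nlinarith [h1, h2, hx]

/-- Any point on the unit circle is (cos t, sin t) for some t. -/
lemma exists_cos_sin (X Y : ℝ) (h : X^2 + Y^2 = 1) :
    ∃ t : ℝ, Real.cos t = X ∧ Real.sin t = Y := by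
  set z : ℂ := ⟨X, Y⟩ with hz
  have habs : ‖z‖ = 1 := by
    have : ‖z‖ ^ 2 = 1 := by
      rw [Complex.sq_norm, Complex.normSq_mk]; nlinarith
    nlinarith [norm_nonneg z]
  have hz0 : z ≠ 0 := by
    intro h0; rw [h0] at habs; simp at habs
  exact ⟨Complex.arg z, by rw [Complex.cos_arg hz0, habs]; simp [hz],
    by rw [Complex.sin_arg, habs]; simp [hz]⟩

/-- Every continuous function on `Γ` that is constant along each
c-orbit is constant on the whole set `E = {A = 0} ∩ Γ`. -/
theorem stmt11 (f : ℝ × ℝ × ℝ × ℝ → ℝ)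
    (hcont : ContinuousOn f GammaSet)
    (hconst : ∀ x ∈ GammaSet, ∀ t : ℝ, f (cFlow x t) = f x) :
    ∀ x ∈ Eset, ∀ y ∈ Eset, f x = f y := by
  have hbase : ((0 : ℝ), (1 : ℝ), (0 : ℝ), (0 : ℝ)) ∈ GammaSet := by
    simp [GammaSet]
  suffices h : ∀ x ∈ Eset, f x = f (0, 1, 0, 0) by
    intro x hx y hy; rw [h x hx, h y hy]
  rintro ⟨q1, q2, p1, p2⟩ ⟨hA, hG⟩
  simp only [Set.mem_setOf_eq] at hA
  simp only [GammaSet, Set.mem_setOf_eq] at hG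
  have hp : p1 ^ 2 = q1 ^ 2 := by nlinarith
  have hcirc : q2 ^ 2 + p2 ^ 2 = 1 := by nlinarith
  -- the limit point on the critical circle
  set y₀ : ℝ × ℝ × ℝ × ℝ := (0, q2, 0, p2) with hy₀
  have hy₀Γ : y₀ ∈ GammaSet := by
    simp only [GammaSet, Set.mem_setOf_eq, hy₀]; nlinarith
  -- Step 2 first: f y₀ = f (0,1,0,0)
  have step2 : f y₀ = f (0, 1, 0, 0) := by
    obtain ⟨t, hct, hst⟩ := exists_cos_sin q2 p2 hcirc
    have := hconst _ hbase t
    have hflow : cFlow (0, 1, 0, 0) t = y₀ := by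
      simp [cFlow, hct, hst, hy₀]
    rw [hflow] at this
    exact this
  rw [← step2]
  -- Step 1: f (q1,q2,p1,p2) = f y₀ by flowing to the critical circle
  -- choose sign ε = 1 if p1 = -q1 (so that q1*cosh t + p1*sinh t = q1*exp(-t))
  have hcases : p1 = q1 ∨ p1 = -q1 := by
    have : (p1 - q1) * (p1 + q1) = 0 := by nlinarith
    rcases mul_eq_zero.mp this with h | h
    · left; linarith
    · right; linarith
  have key : ∀ (seq : ℕ → ℝ × ℝ × ℝ × ℝ),
      (∀ n, seq n ∈ GammaSet) → (∀ n, f (seq n) = f (q1, q2, p1, p2)) →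
      Filter.Tendsto seq Filter.atTop (nhds y₀) → f (q1, q2, p1, p2) = f y₀ := by
    intro seq hmem hval htend
    have hcw : ContinuousWithinAt f GammaSet y₀ := hcont y₀ hy₀Γ
    have htend' : Filter.Tendsto seq Filter.atTop (nhdsWithin y₀ GammaSet) := by
      rw [tendsto_nhdsWithin_iff]
      exact ⟨htend, Filter.Eventually.of_forall hmem⟩
    have h1 : Filter.Tendsto (fun n => f (seq n)) Filter.atTop (nhds (f y₀)) :=
      hcw.tendsto.comp htend'
    have h2 : Filter.Tendsto (fun n => f (seq n)) Filter.atTop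
        (nhds (f (q1, q2, p1, p2))) := by
      simp only [hval]; exact tendsto_const_nhds
    exact tendsto_nhds_unique h2 h1
  have hxΓ : ((q1, q2, p1, p2) : ℝ × ℝ × ℝ × ℝ) ∈ GammaSet := by
    simp only [GammaSet, Set.mem_setOf_eq]; nlinarith
  have hexp : Filter.Tendsto (fun n : ℕ => Real.exp (-(n * (2 * Real.pi))))
      Filter.atTop (nhds 0) := by
    apply Real.tendsto_exp_atBot.comp
    apply Filter.tendsto_neg_atBot_iff.mpr
    apply Filter.Tendsto.atTop_mul_const (by positivity)
    exact tendsto_natCast_atTop_atTop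
  rcases hcases with h1 | h1
  · -- p1 = q1 : flow backwards, t_n = -(n·2π)
    apply key (fun n : ℕ => cFlow (q1, q2, p1, p2) (-(n * (2 * Real.pi))))
    · intro n; exact cFlow_mem_Gamma hxΓ _
    · intro n; exact hconst _ hxΓ _
    · have hform : ∀ n : ℕ, cFlow (q1, q2, p1, p2) (-(n * (2 * Real.pi))) =
          (q1 * Real.exp (-(n * (2 * Real.pi))), q2,
           q1 * Real.exp (-(n * (2 * Real.pi))), p2) := by
        intro n
        have hc : Real.cos (-(n * (2 * Real.pi))) = 1 := by
          rw [Real.cos_neg]; exact Real.cos_nat_mul_two_pi n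
        have hs : Real.sin (-(n * (2 * Real.pi))) = 0 := by
          rw [Real.sin_neg]
          have : (n : ℝ) * (2 * Real.pi) = (2 * n : ℕ) * Real.pi := by
            push_cast; ring
          rw [this, Real.sin_nat_mul_pi]; ring
        have he : Real.cosh ((n : ℝ) * (2 * Real.pi)) - Real.sinh ((n : ℝ) * (2 * Real.pi))
            = Real.exp (-((n : ℝ) * (2 * Real.pi))) := Real.cosh_sub_sinh _
        simp only [cFlow, h1, hc, hs]
        refine Prod.ext ?_ (Prod.ext ?_ (Prod.ext ?_ ?_)) <;> simp <;>
          linear_combination q1 * he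
      simp only [hform, hy₀]
      refine Filter.Tendsto.prodMk_nhds ?_ (Filter.Tendsto.prodMk_nhds tendsto_const_nhds
        (Filter.Tendsto.prodMk_nhds ?_ tendsto_const_nhds))
      · simpa using (tendsto_const_nhds (x := q1)).mul hexp
      · simpa using (tendsto_const_nhds (x := q1)).mul hexp
  · -- p1 = -q1 : flow forwards, t_n = n·2π
    apply key (fun n : ℕ => cFlow (q1, q2, p1, p2) (n * (2 * Real.pi)))
    · intro n; exact cFlow_mem_Gamma hxΓ _
    · intro n; exact hconst _ hxΓ _
    · have hform : ∀ n : ℕ, cFlow (q1, q2, p1, p2) (n * (2 * Real.pi)) =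
          (q1 * Real.exp (-(n * (2 * Real.pi))), q2,
           -(q1 * Real.exp (-(n * (2 * Real.pi)))), p2) := by
        intro n
        have hc : Real.cos ((n : ℝ) * (2 * Real.pi)) = 1 := Real.cos_nat_mul_two_pi n
        have hs : Real.sin ((n : ℝ) * (2 * Real.pi)) = 0 := by
          have : (n : ℝ) * (2 * Real.pi) = (2 * n : ℕ) * Real.pi := by
            push_cast; ring
          rw [this, Real.sin_nat_mul_pi]
        have he : Real.cosh ((n : ℝ) * (2 * Real.pi)) - Real.sinh ((n : ℝ) * (2 * Real.pi))
            = Real.exp (-((n : ℝ) * (2 * Real.pi))) := Real.cosh_sub_sinh _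
        simp only [cFlow, h1, hc, hs]
        refine Prod.ext ?_ (Prod.ext ?_ (Prod.ext ?_ ?_)) <;> simp <;>
          first
          | linear_combination q1 * he
          | linear_combination (-q1) * he
      simp only [hform, hy₀]
      refine Filter.Tendsto.prodMk_nhds ?_ (Filter.Tendsto.prodMk_nhds tendsto_const_nhds
        (Filter.Tendsto.prodMk_nhds ?_ tendsto_const_nhds))
      · simpa using (tendsto_const_nhds (x := q1)).mul hexp
      · simpa using ((tendsto_const_nhds (x := q1)).mul hexp).neg
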